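/- There exists an absolute constant κ > 0 such that the following holds. Let X be a nonempty finite set, Z = X × {0,1}, let H be a nonempty finite set of hypotheses h : X → {0,1}, let α ∈ (0, 1/2], and let n, m ≥ 1 satisfy α·m ≤ 1 and α·n·m ≥ κ·(1 + ln|H|). Then for every probability distribution D on Z, with probability at least 0.9 over z ∼ D^{n·m} (viewed as n users each holding a block of m i.i.d. labeled examples), the following hold simultaneously for every h ∈ H: (i) if Err_D(h) ≤ 0.01·α then scr_h(z) ≤ 0.05·α·n·m; and (ii) if Err_D(h) > α then scr_h(z) > 0.1·α·n·m. -/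
import Mathlib


open scoped BigOperators Classical

noncomputable section

/-- `P` is a probability mass function on a finite type. -/
def IsPMF {α : Type} [Fintype α] (P : α → ℝ) : Prop :=
  (∀ a, 0 ≤ P a) ∧ ∑ a, P a = 1

/-- `Err_D(h) = Pr_{(x,y)∼D}[h(x) ≠ y]`. -/
def errD {X : Type} [Fintype X] (D : X × Bool → ℝ) (h : X → Bool) : ℝ :=
  ∑ z : X × Bool, if h z.1 ≠ z.2 then D z else 0

/-- `scr_h(z)`: the number of user blocks of `z` that are not realizable by `h`. -/
def scr {X : Type} {n m : ℕ} (h : X → Bool) (z : Fin n → Fin m → X × Bool) : ℕ :=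
  (Finset.univ.filter fun i : Fin n => ¬ ∀ j, h (z i j).1 = (z i j).2).card

lemma sum_prod_pow {β : Type*} [Fintype β] (g : β → ℝ) (n : ℕ) :
    ∑ z : Fin n → β, ∏ i, g (z i) = (∑ b, g b) ^ n := by
  rw [← Fintype.prod_sum (f := fun (_ : Fin n) (b : β) => g b)]
  simp

lemma pow_card_eq_prod_ite {ι : Type*} [Fintype ι] (P : ι → Prop) [DecidablePred P] (c : ℝ) :
    c ^ (Finset.univ.filter fun i => ¬ P i).card = ∏ i, (if P i then 1 else c) := by
  rw [Finset.prod_ite]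
  simp [Finset.prod_const]

variable {X : Type} [Fintype X]

/-- probability that a block of m samples is realizable by h -/
def qb (m : ℕ) (D : X × Bool → ℝ) (h : X → Bool) : ℝ :=
  ∑ b : Fin m → X × Bool, (∏ j, D (b j)) * (if ∀ j, h (b j).1 = (b j).2 then 1 else 0)

lemma sum_wB (m : ℕ) (D : X × Bool → ℝ) (hD : IsPMF D) :
    ∑ b : Fin m → X × Bool, (∏ j, D (b j)) = 1 := by
  rw [sum_prod_pow (fun w : X × Bool => D w) m, hD.2, one_pow]

lemma qb_eq (m : ℕ) (D : X × Bool → ℝ) (hD : IsPMF D) (h : X → Bool) :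
    qb m D h = (1 - errD D h) ^ m := by
  have key : ∀ b : Fin m → X × Bool,
      (∏ j, D (b j)) * (if ∀ j, h (b j).1 = (b j).2 then 1 else 0)
        = ∏ j, (D (b j) * (if h (b j).1 = (b j).2 then 1 else 0)) := by
    intro b
    by_cases hb : ∀ j, h (b j).1 = (b j).2
    · simp [hb, Finset.prod_mul_distrib]
    · push_neg at hb
      obtain ⟨j, hj⟩ := hb
      rw [if_neg (by push_neg; exact ⟨j, hj⟩), mul_zero]
      exact (Finset.prod_eq_zero (Finset.mem_univ j) (by simp [hj])).symm
  rw [qb]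
  simp_rw [key]
  rw [sum_prod_pow (fun w : X × Bool => D w * (if h w.1 = w.2 then 1 else 0)) m]
  congr 1
  have e2 : ∀ w : X × Bool, D w * (if h w.1 = w.2 then 1 else 0)
      = D w - (if h w.1 ≠ w.2 then D w else 0) := by
    intro w; by_cases hw : h w.1 = w.2 <;> simp [hw]
  simp_rw [e2]
  rw [Finset.sum_sub_distrib, hD.2, errD]

lemma mgf_eq (n m : ℕ) (D : X × Bool → ℝ) (hD : IsPMF D) (h : X → Bool) (c : ℝ) :
    ∑ z : Fin n → Fin m → X × Bool, (∏ i, ∏ j, D (z i j)) * c ^ scr h z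
      = (qb m D h + (1 - qb m D h) * c) ^ n := by
  have key : ∀ z : Fin n → Fin m → X × Bool,
      (∏ i, ∏ j, D (z i j)) * c ^ scr h z
        = ∏ i, ((∏ j, D (z i j)) * (if ∀ j, h (z i j).1 = (z i j).2 then 1 else c)) := by
    intro z
    rw [scr, pow_card_eq_prod_ite (fun i => ∀ j, h (z i j).1 = (z i j).2) c,
      Finset.prod_mul_distrib]
  simp_rw [key]
  rw [sum_prod_pow (fun b : Fin m → X × Bool =>
    (∏ j, D (b j)) * (if ∀ j, h (b j).1 = (b j).2 then 1 else c)) n]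
  congr 1
  have e1 : ∀ b : Fin m → X × Bool,
      (∏ j, D (b j)) * (if ∀ j, h (b j).1 = (b j).2 then 1 else c)
        = (∏ j, D (b j)) * (if ∀ j, h (b j).1 = (b j).2 then 1 else 0)
          + c * ((∏ j, D (b j)) - (∏ j, D (b j)) * (if ∀ j, h (b j).1 = (b j).2 then 1 else 0)) := by
    intro b; by_cases hb : ∀ j, h (b j).1 = (b j).2 <;> simp [hb] <;> ring
  simp_rw [e1]
  rw [Finset.sum_add_distrib, ← Finset.mul_sum, Finset.sum_sub_distrib, sum_wB m D hD]
  rw [← qb]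
  ring

lemma W_nonneg {n m : ℕ} (D : X × Bool → ℝ) (hD : IsPMF D) (z : Fin n → Fin m → X × Bool) :
    0 ≤ ∏ i, ∏ j, D (z i j) :=
  Finset.prod_nonneg fun i _ => Finset.prod_nonneg fun j _ => hD.1 _

lemma errD_nonneg (D : X × Bool → ℝ) (hD : IsPMF D) (h : X → Bool) : 0 ≤ errD D h :=
  Finset.sum_nonneg fun w _ => by by_cases hw : h w.1 ≠ w.2 <;> simp [hw, hD.1 w]

lemma errD_le_one (D : X × Bool → ℝ) (hD : IsPMF D) (h : X → Bool) : errD D h ≤ 1 := by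
  rw [← hD.2]
  exact Finset.sum_le_sum fun w _ => by by_cases hw : h w.1 ≠ w.2 <;> simp [hw, hD.1 w]

lemma markov_upper (n m : ℕ) (D : X × Bool → ℝ) (hD : IsPMF D) (h : X → Bool) (a : ℝ) :
    ∑ z : Fin n → Fin m → X × Bool,
        (∏ i, ∏ j, D (z i j)) * (if a < (scr h z : ℝ) then 1 else 0)
      ≤ Real.exp (-a) * (qb m D h + (1 - qb m D h) * Real.exp 1) ^ n := by
  rw [← mgf_eq n m D hD h (Real.exp 1), Finset.mul_sum]
  apply Finset.sum_le_sum
  intro z _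
  have hW := W_nonneg D hD z
  have hexp : Real.exp 1 ^ scr h z = Real.exp (scr h z) := by
    rw [← Real.exp_nat_mul, mul_one]
  by_cases hz : a < (scr h z : ℝ)
  · rw [if_pos hz, mul_one]
    calc (∏ i, ∏ j, D (z i j)) = (∏ i, ∏ j, D (z i j)) * 1 := by ring
    _ ≤ (∏ i, ∏ j, D (z i j)) * (Real.exp (-a) * Real.exp 1 ^ scr h z) := by
        apply mul_le_mul_of_nonneg_left _ hW
        rw [hexp, ← Real.exp_add]
        nlinarith [Real.add_one_le_exp (-a + (scr h z : ℝ))]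
    _ = Real.exp (-a) * ((∏ i, ∏ j, D (z i j)) * Real.exp 1 ^ scr h z) := by ring
  · rw [if_neg hz, mul_zero]
    positivity

lemma markov_lower (n m : ℕ) (D : X × Bool → ℝ) (hD : IsPMF D) (h : X → Bool) (a : ℝ) :
    ∑ z : Fin n → Fin m → X × Bool,
        (∏ i, ∏ j, D (z i j)) * (if (scr h z : ℝ) ≤ a then 1 else 0)
      ≤ Real.exp a * (qb m D h + (1 - qb m D h) * Real.exp (-1)) ^ n := by
  rw [← mgf_eq n m D hD h (Real.exp (-1)), Finset.mul_sum]
  apply Finset.sum_le_sum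
  intro z _
  have hW := W_nonneg D hD z
  have hexp : Real.exp (-1) ^ scr h z = Real.exp (-(scr h z : ℝ)) := by
    rw [← Real.exp_nat_mul]; norm_num
  by_cases hz : (scr h z : ℝ) ≤ a
  · rw [if_pos hz, mul_one]
    calc (∏ i, ∏ j, D (z i j)) = (∏ i, ∏ j, D (z i j)) * 1 := by ring
    _ ≤ (∏ i, ∏ j, D (z i j)) * (Real.exp a * Real.exp (-1) ^ scr h z) := by
        apply mul_le_mul_of_nonneg_left _ hW
        rw [hexp, ← Real.exp_add]
        nlinarith [Real.add_one_le_exp (a + -(scr h z : ℝ))]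
    _ = Real.exp a * ((∏ i, ∏ j, D (z i j)) * Real.exp (-1) ^ scr h z) := by ring
  · rw [if_neg hz, mul_zero]
    positivity

set_option maxHeartbeats 1600000 in
lemma per_h (n m : ℕ) (hn : 1 ≤ n) (hm : 1 ≤ m) (α : ℝ) (hα : 0 < α)
    (hα2 : α ≤ 1 / 2) (hαm : α * m ≤ 1)
    (D : X × Bool → ℝ) (hD : IsPMF D) (h : X → Bool) :
    ∑ z : Fin n → Fin m → X × Bool, (∏ i, ∏ j, D (z i j)) *
      (if ¬ ((errD D h ≤ 0.01 * α → (scr h z : ℝ) ≤ 0.05 * α * n * m) ∧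
             (errD D h > α → (scr h z : ℝ) > 0.1 * α * n * m)) then 1 else 0)
      ≤ Real.exp (-(0.03 * (α * n * m))) := by
  have hE0 := errD_nonneg D hD h
  have hE1 := errD_le_one D hD h
  have hq_eq := qb_eq m D hD h
  have hq0 : 0 ≤ qb m D h := by
    rw [hq_eq]; exact pow_nonneg (by linarith) m
  have hq1 : qb m D h ≤ 1 := by
    rw [hq_eq]; exact pow_le_one₀ (by linarith) (by linarith)
  have hm1 : (1:ℝ) ≤ (m:ℝ) := by exact_mod_cast hm
  have hn1 : (1:ℝ) ≤ (n:ℝ) := by exact_mod_cast hn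
  have hA0 : 0 ≤ α * n * m := by positivity
  by_cases hE : errD D h ≤ 0.01 * α
  · -- small error: bound probability that scr is large
    have step1 : ∑ z : Fin n → Fin m → X × Bool, (∏ i, ∏ j, D (z i j)) *
        (if ¬ ((errD D h ≤ 0.01 * α → (scr h z : ℝ) ≤ 0.05 * α * n * m) ∧
               (errD D h > α → (scr h z : ℝ) > 0.1 * α * n * m)) then 1 else 0)
        ≤ ∑ z : Fin n → Fin m → X × Bool, (∏ i, ∏ j, D (z i j)) *
            (if 0.05 * α * n * m < (scr h z : ℝ) then 1 else 0) := by
      apply Finset.sum_le_sum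
      intro z _
      apply mul_le_mul_of_nonneg_left _ (W_nonneg D hD z)
      by_cases hb : ¬ ((errD D h ≤ 0.01 * α → (scr h z : ℝ) ≤ 0.05 * α * n * m) ∧
               (errD D h > α → (scr h z : ℝ) > 0.1 * α * n * m))
      · rw [if_pos hb, if_pos]
        by_contra hc
        push_neg at hc
        exact hb ⟨fun _ => hc, fun hgt => absurd hgt (by linarith)⟩
      · rw [if_neg hb]
        split <;> norm_num
    have step2 := markov_upper n m D hD h (0.05 * α * n * m)
    -- numeric bound
    have h1q : 1 - qb m D h ≤ 0.01 * α * m := by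
      have hber := one_add_mul_le_pow (show (-2:ℝ) ≤ -errD D h by linarith) m
      rw [hq_eq]
      have h15 : (1 + -errD D h) ^ m = (1 - errD D h) ^ m := by ring_nf
      have h16 : (m:ℝ) * errD D h ≤ (m:ℝ) * (0.01 * α) :=
        mul_le_mul_of_nonneg_left hE (by linarith)
      nlinarith [hber]
    have he1 : Real.exp 1 ≤ 2.72 := by
      have := Real.exp_one_lt_d9; linarith
    have he0 : (1:ℝ) ≤ Real.exp 1 := by
      have := Real.add_one_le_exp (1:ℝ); linarith
    have hbase0 : 0 ≤ qb m D h + (1 - qb m D h) * Real.exp 1 := by nlinarith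
    have hbase : qb m D h + (1 - qb m D h) * Real.exp 1
        ≤ Real.exp ((1 - qb m D h) * (Real.exp 1 - 1)) := by
      have := Real.add_one_le_exp ((1 - qb m D h) * (Real.exp 1 - 1))
      nlinarith
    have hpow : (qb m D h + (1 - qb m D h) * Real.exp 1) ^ n
        ≤ Real.exp ((n:ℝ) * ((1 - qb m D h) * (Real.exp 1 - 1))) := by
      rw [Real.exp_nat_mul]
      exact pow_le_pow_left₀ hbase0 hbase n
    have hfin : Real.exp (-(0.05 * α * n * m)) *
        Real.exp ((n:ℝ) * ((1 - qb m D h) * (Real.exp 1 - 1)))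
        ≤ Real.exp (-(0.03 * (α * n * m))) := by
      rw [← Real.exp_add, Real.exp_le_exp]
      have key : (n:ℝ) * ((1 - qb m D h) * (Real.exp 1 - 1)) ≤ 0.02 * (α * n * m) := by
        have h2 : (1 - qb m D h) * (Real.exp 1 - 1) ≤ (0.01 * α * m) * 1.72 := by
          apply mul_le_mul h1q (by linarith) (by linarith) (by positivity)
        have h3 : (n:ℝ) * ((1 - qb m D h) * (Real.exp 1 - 1)) ≤ (n:ℝ) * ((0.01 * α * m) * 1.72) :=
          mul_le_mul_of_nonneg_left h2 (by linarith)
        have h4 : (n:ℝ) * ((0.01 * α * m) * 1.72) = 0.0172 * (α * n * m) := by ring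
        linarith
      linarith
    calc _ ≤ _ := step1
      _ ≤ _ := step2
      _ ≤ Real.exp (-(0.05 * α * n * m)) *
            Real.exp ((n:ℝ) * ((1 - qb m D h) * (Real.exp 1 - 1))) :=
          mul_le_mul_of_nonneg_left hpow (Real.exp_pos _).le
      _ ≤ _ := hfin
  · by_cases hE2 : α < errD D h
    · -- large error: bound probability that scr is small
      have step1 : ∑ z : Fin n → Fin m → X × Bool, (∏ i, ∏ j, D (z i j)) *
          (if ¬ ((errD D h ≤ 0.01 * α → (scr h z : ℝ) ≤ 0.05 * α * n * m) ∧
                 (errD D h > α → (scr h z : ℝ) > 0.1 * α * n * m)) then 1 else 0)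
          ≤ ∑ z : Fin n → Fin m → X × Bool, (∏ i, ∏ j, D (z i j)) *
              (if (scr h z : ℝ) ≤ 0.1 * α * n * m then 1 else 0) := by
        apply Finset.sum_le_sum
        intro z _
        apply mul_le_mul_of_nonneg_left _ (W_nonneg D hD z)
        by_cases hb : ¬ ((errD D h ≤ 0.01 * α → (scr h z : ℝ) ≤ 0.05 * α * n * m) ∧
                 (errD D h > α → (scr h z : ℝ) > 0.1 * α * n * m))
        · rw [if_pos hb, if_pos]
          by_contra hc
          push_neg at hc
          exact hb ⟨fun hle => absurd hle hE, fun _ => hc⟩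
        · rw [if_neg hb]
          split <;> norm_num
      have step2 := markov_lower n m D hD h (0.1 * α * n * m)
      -- 1 - q ≥ α m / 2
      have hq_le : qb m D h ≤ 1 - α * m / 2 := by
        rw [hq_eq]
        have s1 : (1 - errD D h) ^ m ≤ (1 - α) ^ m :=
          pow_le_pow_left₀ (by linarith) (by linarith) m
        have s2 : (1 - α) ^ m ≤ Real.exp (-α) ^ m :=
          pow_le_pow_left₀ (by linarith) (by have := Real.add_one_le_exp (-α); linarith) m
        have s3 : Real.exp (-α) ^ m = Real.exp (-(α * m)) := by
          rw [← Real.exp_nat_mul]; ring_nf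
        have s4 : Real.exp (-(α * m)) ≤ 1 - α * m / 2 := by
          have hx0 : 0 < α * m := by positivity
          have hx1 : 1 + α * m ≤ Real.exp (α * m) := by
            have := Real.add_one_le_exp (α * m); linarith
          rw [Real.exp_neg]
          have i1 : (Real.exp (α * m))⁻¹ ≤ (1 + α * m)⁻¹ := by
            apply inv_anti₀ (by linarith) hx1
          have i2 : (1 + α * m)⁻¹ ≤ 1 - α * m / 2 := by
            rw [inv_le_iff_one_le_mul₀ (by linarith)]
            nlinarith
          linarith
        linarith
      have he0 : 0 < Real.exp (-1 : ℝ) := Real.exp_pos _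
      have heinv : Real.exp (-1 : ℝ) ≤ 0.4 := by
        rw [Real.exp_neg]
        have h27 : (2.7:ℝ) ≤ Real.exp 1 := by have := Real.exp_one_gt_d9; linarith
        have := inv_anti₀ (by norm_num : (0:ℝ) < 2.7) h27
        linarith [this]
      have hbase0 : 0 ≤ qb m D h + (1 - qb m D h) * Real.exp (-1 : ℝ) := by nlinarith
      have hbase : qb m D h + (1 - qb m D h) * Real.exp (-1 : ℝ)
          ≤ Real.exp (-((1 - qb m D h) * (1 - Real.exp (-1 : ℝ)))) := by
        have := Real.add_one_le_exp (-((1 - qb m D h) * (1 - Real.exp (-1 : ℝ))))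
        nlinarith
      have hpow : (qb m D h + (1 - qb m D h) * Real.exp (-1 : ℝ)) ^ n
          ≤ Real.exp ((n:ℝ) * -((1 - qb m D h) * (1 - Real.exp (-1 : ℝ)))) := by
        rw [Real.exp_nat_mul]
        exact pow_le_pow_left₀ hbase0 hbase n
      have hfin : Real.exp (0.1 * α * n * m) *
          Real.exp ((n:ℝ) * -((1 - qb m D h) * (1 - Real.exp (-1 : ℝ))))
          ≤ Real.exp (-(0.03 * (α * n * m))) := by
        rw [← Real.exp_add, Real.exp_le_exp]
        have key : 0.13 * (α * n * m) ≤ (n:ℝ) * ((1 - qb m D h) * (1 - Real.exp (-1 : ℝ))) := by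
          have h2 : (α * m / 2) * 0.6 ≤ (1 - qb m D h) * (1 - Real.exp (-1 : ℝ)) := by
            apply mul_le_mul (by linarith) (by linarith) (by norm_num) (by linarith)
          have h3 : (n:ℝ) * ((α * m / 2) * 0.6) ≤
              (n:ℝ) * ((1 - qb m D h) * (1 - Real.exp (-1 : ℝ))) :=
            mul_le_mul_of_nonneg_left h2 (by linarith)
          have h4 : (n:ℝ) * ((α * m / 2) * 0.6) = 0.3 * (α * n * m) := by ring
          linarith
        linarith
      calc _ ≤ _ := step1
        _ ≤ _ := step2
        _ ≤ Real.exp (0.1 * α * n * m) *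
              Real.exp ((n:ℝ) * -((1 - qb m D h) * (1 - Real.exp (-1 : ℝ)))) :=
            mul_le_mul_of_nonneg_left hpow (Real.exp_pos _).le
        _ ≤ _ := hfin
    · -- medium error: the event is empty
      have hgood : ∀ z : Fin n → Fin m → X × Bool,
          ((errD D h ≤ 0.01 * α → (scr h z : ℝ) ≤ 0.05 * α * n * m) ∧
           (errD D h > α → (scr h z : ℝ) > 0.1 * α * n * m)) :=
        fun z => ⟨fun c => absurd c hE, fun c => absurd c hE2⟩
      have hz : ∑ z : Fin n → Fin m → X × Bool, (∏ i, ∏ j, D (z i j)) *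
          (if ¬ ((errD D h ≤ 0.01 * α → (scr h z : ℝ) ≤ 0.05 * α * n * m) ∧
                 (errD D h > α → (scr h z : ℝ) > 0.1 * α * n * m)) then 1 else 0) = 0 :=
        Finset.sum_eq_zero fun z _ => by
          rw [if_neg (not_not_intro (hgood z)), mul_zero]
      rw [hz]
      exact (Real.exp_pos _).le

lemma sum_W (n m : ℕ) (D : X × Bool → ℝ) (hD : IsPMF D) :
    ∑ z : Fin n → Fin m → X × Bool, ∏ i, ∏ j, D (z i j) = 1 := by
  rw [sum_prod_pow (fun b : Fin m → X × Bool => ∏ j, D (b j)) n, sum_wB m D hD, one_pow]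

/-- Concentration of the clipped (per-user) scores used in the user-level
pure-DP PAC learner. -/
theorem concen_pac_scores :
    ∃ κ > (0:ℝ),
      ∀ (X : Type) [Fintype X] [Nonempty X],
      ∀ H : Finset (X → Bool), H.Nonempty →
      ∀ α : ℝ, 0 < α → α ≤ 1 / 2 →
      ∀ n m : ℕ, 1 ≤ n → 1 ≤ m → α * m ≤ 1 →
        κ * (1 + Real.log H.card) ≤ α * n * m →
      ∀ D : X × Bool → ℝ, IsPMF D →
        (0.9 : ℝ) ≤ ∑ z : Fin n → Fin m → X × Bool,
          (∏ i, ∏ j, D (z i j)) *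
            (if ∀ h ∈ H,
                (errD D h ≤ 0.01 * α → (scr h z : ℝ) ≤ 0.05 * α * n * m) ∧
                (errD D h > α → (scr h z : ℝ) > 0.1 * α * n * m)
             then 1 else 0) := by
  refine ⟨1000, by norm_num, ?_⟩
  intro X _ _ H hH α hα hα2 n m hn hm hαm hκ D hD
  have hWsum := sum_W n m D hD
  suffices hbad : ∑ z : Fin n → Fin m → X × Bool,
      (∏ i, ∏ j, D (z i j)) *
        (if ¬ (∀ h ∈ H,
            (errD D h ≤ 0.01 * α → (scr h z : ℝ) ≤ 0.05 * α * n * m) ∧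
            (errD D h > α → (scr h z : ℝ) > 0.1 * α * n * m)) then 1 else 0) ≤ 0.1 by
    have hsplit : (∑ z : Fin n → Fin m → X × Bool,
        (∏ i, ∏ j, D (z i j)) *
          (if ∀ h ∈ H,
              (errD D h ≤ 0.01 * α → (scr h z : ℝ) ≤ 0.05 * α * n * m) ∧
              (errD D h > α → (scr h z : ℝ) > 0.1 * α * n * m) then 1 else 0))
        + (∑ z : Fin n → Fin m → X × Bool,
            (∏ i, ∏ j, D (z i j)) *
              (if ¬ (∀ h ∈ H,
                  (errD D h ≤ 0.01 * α → (scr h z : ℝ) ≤ 0.05 * α * n * m) ∧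
                  (errD D h > α → (scr h z : ℝ) > 0.1 * α * n * m)) then 1 else 0)) = 1 := by
      conv_rhs => rw [← hWsum]
      rw [← Finset.sum_add_distrib]
      apply Finset.sum_congr rfl
      intro z _
      by_cases g : ∀ h ∈ H,
          (errD D h ≤ 0.01 * α → (scr h z : ℝ) ≤ 0.05 * α * n * m) ∧
          (errD D h > α → (scr h z : ℝ) > 0.1 * α * n * m)
      · rw [if_pos g, if_neg (not_not_intro g)]; ring
      · rw [if_neg g, if_pos g]; ring
    linarith
  have union : ∑ z : Fin n → Fin m → X × Bool,
      (∏ i, ∏ j, D (z i j)) *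
        (if ¬ (∀ h ∈ H,
            (errD D h ≤ 0.01 * α → (scr h z : ℝ) ≤ 0.05 * α * n * m) ∧
            (errD D h > α → (scr h z : ℝ) > 0.1 * α * n * m)) then 1 else 0)
      ≤ ∑ z : Fin n → Fin m → X × Bool, ∑ h ∈ H,
          (∏ i, ∏ j, D (z i j)) *
            (if ¬ ((errD D h ≤ 0.01 * α → (scr h z : ℝ) ≤ 0.05 * α * n * m) ∧
                   (errD D h > α → (scr h z : ℝ) > 0.1 * α * n * m)) then 1 else 0) := by
    apply Finset.sum_le_sum
    intro z _
    have hterm : ∀ h ∈ H, (0:ℝ) ≤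
        (∏ i, ∏ j, D (z i j)) *
          (if ¬ ((errD D h ≤ 0.01 * α → (scr h z : ℝ) ≤ 0.05 * α * n * m) ∧
                 (errD D h > α → (scr h z : ℝ) > 0.1 * α * n * m)) then 1 else 0) := by
      intro h _
      apply mul_nonneg (W_nonneg D hD z)
      split <;> norm_num
    by_cases g : ∀ h ∈ H,
        (errD D h ≤ 0.01 * α → (scr h z : ℝ) ≤ 0.05 * α * n * m) ∧
        (errD D h > α → (scr h z : ℝ) > 0.1 * α * n * m)
    · rw [if_neg (not_not_intro g), mul_zero]
      exact Finset.sum_nonneg hterm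
    · rw [if_pos g, mul_one]
      have hex : ∃ h₀ ∈ H, ¬ ((errD D h₀ ≤ 0.01 * α → (scr h₀ z : ℝ) ≤ 0.05 * α * n * m) ∧
                    (errD D h₀ > α → (scr h₀ z : ℝ) > 0.1 * α * n * m)) := by
        by_contra hc
        apply g
        intro h hh
        by_contra hC
        exact hc ⟨h, hh, hC⟩
      obtain ⟨h₀, hh₀, hb'⟩ := hex
      have := Finset.single_le_sum hterm hh₀
      rwa [if_pos hb', mul_one] at this
  have swap : ∑ z : Fin n → Fin m → X × Bool, ∑ h ∈ H,
      (∏ i, ∏ j, D (z i j)) *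
        (if ¬ ((errD D h ≤ 0.01 * α → (scr h z : ℝ) ≤ 0.05 * α * n * m) ∧
               (errD D h > α → (scr h z : ℝ) > 0.1 * α * n * m)) then 1 else 0)
      = ∑ h ∈ H, ∑ z : Fin n → Fin m → X × Bool,
          (∏ i, ∏ j, D (z i j)) *
            (if ¬ ((errD D h ≤ 0.01 * α → (scr h z : ℝ) ≤ 0.05 * α * n * m) ∧
                   (errD D h > α → (scr h z : ℝ) > 0.1 * α * n * m)) then 1 else 0) :=
    Finset.sum_comm
  have hperh : ∑ h ∈ H, ∑ z : Fin n → Fin m → X × Bool,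
      (∏ i, ∏ j, D (z i j)) *
        (if ¬ ((errD D h ≤ 0.01 * α → (scr h z : ℝ) ≤ 0.05 * α * n * m) ∧
               (errD D h > α → (scr h z : ℝ) > 0.1 * α * n * m)) then 1 else 0)
      ≤ ∑ _h ∈ H, Real.exp (-(0.03 * (α * n * m))) :=
    Finset.sum_le_sum fun h _ => per_h n m hn hm α hα hα2 hαm D hD h
  have hcard1 : (1:ℝ) ≤ H.card := by
    have := Finset.card_pos.2 hH
    exact_mod_cast this
  have hL : 0 ≤ Real.log H.card := Real.log_nonneg hcard1
  have hnum : (H.card : ℝ) * Real.exp (-(0.03 * (α * n * m))) ≤ 0.1 := by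
    have hexp : (H.card:ℝ) = Real.exp (Real.log H.card) := (Real.exp_log (by linarith)).symm
    calc (H.card : ℝ) * Real.exp (-(0.03 * (α * n * m)))
        = Real.exp (Real.log H.card + -(0.03 * (α * n * m))) := by
          rw [Real.exp_add, ← hexp]
      _ ≤ Real.exp (-30) := Real.exp_le_exp.2 (by linarith)
      _ ≤ 0.1 := by
          have h31 : (31:ℝ) ≤ Real.exp 30 := by
            have := Real.add_one_le_exp (30:ℝ); linarith
          rw [Real.exp_neg]
          have : (Real.exp 30)⁻¹ ≤ 31⁻¹ := by
            apply inv_anti₀ (by norm_num) h31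
          linarith
  calc _ ≤ _ := union
    _ = _ := swap
    _ ≤ ∑ _h ∈ H, Real.exp (-(0.03 * (α * n * m))) := hperh
    _ = (H.card : ℝ) * Real.exp (-(0.03 * (α * n * m))) := by
        rw [Finset.sum_const, nsmul_eq_mul]
    _ ≤ 0.1 := hnum
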